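/- Let F be a rigid field of level s(F) = 2 and let φ, ψ be quadratic forms over F such that φ ⊥ ψ is anisotropic. Then D_F(φ ⊥ ψ) = D_F(φ) ∪ D_F(ψ) ∪ { x ∈ F* : −x ∈ D_F(φ) ∩ D_F(ψ) }. -/

import Mathlib

namespace PN

variable (F : Type*) [Field F]

/-- The diagonal quadratic form with diagonal entries given by a list. -/
noncomputable def qf (l : List F) : QuadraticForm F (Fin l.length → F) :=
  QuadraticMap.weightedSumSquares F l.get

/-- Isometry of diagonal quadratic forms. -/
def Isom (l l' : List F) : Prop :=
  Nonempty (QuadraticMap.IsometryEquiv (qf F l) (qf F l'))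

/-- Diagonalization of the sum of `k` hyperbolic planes. -/
def hypList (k : ℕ) : List F :=
  List.replicate k (1 : F) ++ List.replicate k (-1 : F)

/-- A (diagonalized) form is hyperbolic if it is isometric to a sum of hyperbolic planes. -/
def IsHyp (l : List F) : Prop := ∃ k : ℕ, Isom F l (hypList F k)

def negList (l : List F) : List F := l.map (fun x => -x)

/-- Witt equivalence of diagonalized quadratic forms. -/
def WittEquiv (l l' : List F) : Prop := IsHyp F (l ++ negList F l')

/-- Nondegeneracy: all diagonal entries are nonzero. -/
def Nondeg (l : List F) : Prop := ∀ x ∈ l, x ≠ 0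

/-- Diagonalization of the Pfister form `⟪a₁,…,aₙ⟫ = ⟨1,-a₁⟩⊗⋯⊗⟨1,-aₙ⟩`. -/
def pfister : List F → List F
  | [] => [1]
  | a :: l => pfister l ++ (pfister l).map (fun x => -a * x)

/-- `l` is a diagonalization of an `n`-fold Pfister form. -/
def IsPfister (n : ℕ) (l : List F) : Prop :=
  ∃ a : Fin n → F, (∀ i, a i ≠ 0) ∧ l = pfister F (List.ofFn a)

/-- `l` is a diagonalization of a form similar to an `n`-fold Pfister form. -/
def IsGP (n : ℕ) (l : List F) : Prop :=
  ∃ c : F, c ≠ 0 ∧ ∃ p : List F, IsPfister F n p ∧ l = p.map (fun x => c * x)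

/-- The Witt class of `l` lies in `IⁿF`, i.e. it is a sum of classes of
forms similar to `n`-fold Pfister forms. -/
def InI (n : ℕ) (l : List F) : Prop :=
  ∃ L : List (List F), (∀ p ∈ L, IsGP F n p) ∧ WittEquiv F l L.flatten

/-- The (scaled) `n`-Pfister number of `l` (`⊤` if the Witt class of `l` is not in `IⁿF`). -/
noncomputable def GPnum (n : ℕ) (l : List F) : ℕ∞ :=
  sInf {k : ℕ∞ | ∃ L : List (List F), (L.length : ℕ∞) = k ∧
    (∀ p ∈ L, IsGP F n p) ∧ WittEquiv F l L.flatten}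

/-- The unscaled `n`-Pfister number: least number of genuine `n`-fold Pfister
forms with signs `±1` whose Witt classes sum to that of `l`. -/
noncomputable def Pnum (n : ℕ) (l : List F) : ℕ∞ :=
  sInf {k : ℕ∞ | ∃ L : List (List F), (L.length : ℕ∞) = k ∧
    (∀ p ∈ L, IsPfister F n p ∨ ∃ q : List F, IsPfister F n q ∧ p = negList F q) ∧
    WittEquiv F l L.flatten}

/-- `GP_n(F, d)`: the supremum of `n`-Pfister numbers of forms in `IⁿF` of dimension `≤ d`. -/
noncomputable def GPsup (n : ℕ) (d : ℕ) : ℕ∞ :=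
  ⨆ l ∈ {l : List F | Nondeg F l ∧ InI F n l ∧ l.length ≤ d}, GPnum F n l

/-- `a` is a nonzero value represented by the form `l`. -/
def Represents (l : List F) (a : F) : Prop := a ≠ 0 ∧ ∃ x, qf F l x = a

/-- The set of nonzero represented values. -/
def D (l : List F) : Set F := {a | Represents F l a}

def Anisotropic (l : List F) : Prop := (qf F l).Anisotropic

def SameSquareClass (a b : F) : Prop := ∃ c : F, c ≠ 0 ∧ a = b * c ^ 2

/-- A field is rigid if every anisotropic binary form represents at most two square classes. -/
def Rigid : Prop := ∀ x y : F, x ≠ 0 → y ≠ 0 → Anisotropic F [x, y] →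
  ∃ u v : F, ∀ a : F, Represents F [x, y] a →
    SameSquareClass F a u ∨ SameSquareClass F a v

/-- The level `s(F)`: the least `n` such that `-1` is a sum of `n` squares (`⊤` if none). -/
noncomputable def level : ℕ∞ :=
  sInf {m : ℕ∞ | ∃ n : ℕ, m = (n : ℕ∞) ∧ ∃ f : Fin n → F, (-1 : F) = ∑ i, f i ^ 2}

/-- `l` is (isometric to) a subform of `l'`. -/
def Subform (l l' : List F) : Prop := ∃ r : List F, Isom F l' (l ++ r)

end PN



section Aux
variable {F : Type*} [Field F]

lemma qf_apply (l : List F) (x : Fin l.length → F) :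
    PN.qf F l x = ∑ i, l.get i * (x i * x i) := by
  simp [PN.qf, QuadraticMap.weightedSumSquares_apply, smul_eq_mul]

lemma qf_append (l l' : List F) (z : Fin (l ++ l').length → F) :
    PN.qf F (l ++ l') z =
      PN.qf F l (fun i => z (Fin.cast (List.length_append : (l ++ l').length = l.length + l'.length).symm (Fin.castAdd l'.length i)))
      + PN.qf F l' (fun j => z (Fin.cast (List.length_append : (l ++ l').length = l.length + l'.length).symm (Fin.natAdd l.length j))) := by
  rw [qf_apply, qf_apply, qf_apply]
  rw [← Equiv.sum_comp (finCongr (List.length_append : (l ++ l').length = l.length + l'.length).symm)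
      (fun i => (l ++ l').get i * (z i * z i))]
  rw [Fin.sum_univ_add]
  congr 1
  · apply Finset.sum_congr rfl
    intro i _
    congr 1
    simp only [List.get_eq_getElem, finCongr_apply, Fin.coe_cast, Fin.coe_castAdd]
    exact List.getElem_append_left i.isLt
  · apply Finset.sum_congr rfl
    intro j _
    congr 1
    simp only [List.get_eq_getElem, finCongr_apply, Fin.coe_cast, Fin.coe_natAdd]
    rw [List.getElem_append_right (Nat.le_add_right _ _)]
    simp

lemma qf_combine (l l' : List F) (x : Fin l.length → F) (y : Fin l'.length → F) :
    ∃ z : Fin (l ++ l').length → F,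
      PN.qf F (l ++ l') z = PN.qf F l x + PN.qf F l' y ∧ (z = 0 → x = 0 ∧ y = 0) := by
  refine ⟨fun k => Fin.addCases x y (Fin.cast (List.length_append : (l ++ l').length = l.length + l'.length) k), ?_, ?_⟩
  · rw [qf_append]
    congr 1 <;> congr 1 <;> funext i <;> simp
  · intro hz
    constructor <;> funext i
    · have := congrFun hz (Fin.cast (List.length_append : (l ++ l').length = l.length + l'.length).symm (Fin.castAdd l'.length i))
      simpa using this
    · have := congrFun hz (Fin.cast (List.length_append : (l ++ l').length = l.length + l'.length).symm (Fin.natAdd l.length i))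
      simpa using this

lemma qf_pair (a b : F) (w : Fin 2 → F) :
    PN.qf F [a, b] w = a * (w 0 * w 0) + b * (w 1 * w 1) := by
  rw [qf_apply]
  simp [Fin.sum_univ_succ]

lemma qf_pair_exists (a b s t : F) :
    ∃ w : Fin 2 → F,
      PN.qf F [a, b] w = a * (s * s) + b * (t * t) :=
  ⟨![s, t], by rw [qf_pair]; norm_num⟩

lemma ssc_symm {a b : F} (h : PN.SameSquareClass F a b) : PN.SameSquareClass F b a := by
  obtain ⟨c, hc, rfl⟩ := h
  exact ⟨c⁻¹, inv_ne_zero hc, by field_simp⟩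

lemma ssc_trans {a b c : F} (h : PN.SameSquareClass F a b) (h' : PN.SameSquareClass F b c) :
    PN.SameSquareClass F a c := by
  obtain ⟨d, hd, rfl⟩ := h
  obtain ⟨e, he, rfl⟩ := h'
  exact ⟨e * d, mul_ne_zero he hd, by ring⟩

lemma ssc_trans' {a b c : F} (h : PN.SameSquareClass F a c) (h' : PN.SameSquareClass F b c) :
    PN.SameSquareClass F a b := ssc_trans h (ssc_symm h')

lemma D_congr {l : List F} {a b : F} (ha : a ∈ PN.D F l) (h : PN.SameSquareClass F b a)
    (hb : b ≠ 0) : b ∈ PN.D F l := by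
  obtain ⟨ha0, x, hx⟩ := ha
  obtain ⟨c, hc, rfl⟩ := h
  refine ⟨hb, c • x, ?_⟩
  rw [QuadraticMap.map_smul, hx, smul_eq_mul]
  ring

lemma level_two (h : PN.level F = 2) :
    (∃ p q : F, p ^ 2 + q ^ 2 = -1) ∧ ∀ c : F, c ^ 2 ≠ -1 := by
  set S : Set ℕ∞ := {m : ℕ∞ | ∃ n : ℕ, m = (n : ℕ∞) ∧ ∃ f : Fin n → F, (-1 : F) = ∑ i, f i ^ 2}
    with hS
  have hinf : sInf S = 2 := h
  constructor
  · have hex : ∃ m ∈ S, m < 3 := by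
      by_contra hc
      push_neg at hc
      have : (3 : ℕ∞) ≤ sInf S := le_sInf (fun m hm => (hc m hm))
      rw [hinf] at this
      exact absurd this (by norm_num)
    obtain ⟨m, hm, hm3⟩ := hex
    have hm2 : (2 : ℕ∞) ≤ m := hinf ▸ sInf_le hm
    obtain ⟨n, rfl, f, hf⟩ := hm
    have hn : n = 2 := by
      have h1 : (2 : ℕ) ≤ n := by exact_mod_cast hm2
      have h2 : n < 3 := by exact_mod_cast hm3
      omega
    subst hn
    refine ⟨f 0, f 1, ?_⟩
    rw [Fin.sum_univ_two] at hf
    exact hf.symm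
  · intro c hc
    have h1 : (1 : ℕ∞) ∈ S := ⟨1, rfl, ![c], by simp [hc.symm]⟩
    have := sInf_le h1
    rw [hinf] at this
    exact absurd this (by norm_num)

end Aux

theorem stmt_12 (F : Type*) [Field F] (hF : (2 : F) ≠ 0)
    (hrigid : PN.Rigid F) (hlevel : PN.level F = 2)
    (φ ψ : List F) (hφ : PN.Nondeg F φ) (hψ : PN.Nondeg F ψ)
    (han : PN.Anisotropic F (φ ++ ψ)) :
    PN.D F (φ ++ ψ) =
      PN.D F φ ∪ PN.D F ψ ∪ {x : F | x ≠ 0 ∧ -x ∈ PN.D F φ ∩ PN.D F ψ} := by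
  obtain ⟨⟨p, q, hpq⟩, hsq⟩ := level_two (F := F) hlevel
  ext x
  simp only [Set.mem_union, Set.mem_setOf_eq, Set.mem_inter_iff]
  constructor
  · rintro ⟨hx0, z, hz⟩
    rw [qf_append] at hz
    set u : Fin φ.length → F :=
      fun i => z (Fin.cast (List.length_append : (φ ++ ψ).length = φ.length + ψ.length).symm (Fin.castAdd ψ.length i)) with hu
    set v : Fin ψ.length → F :=
      fun j => z (Fin.cast (List.length_append : (φ ++ ψ).length = φ.length + ψ.length).symm (Fin.natAdd φ.length j)) with hv
    set A := PN.qf F φ u with hA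
    set B := PN.qf F ψ v with hB
    by_cases ha0 : A = 0
    · left; right
      exact ⟨hx0, v, by rw [← hz, ha0, zero_add]⟩
    by_cases hb0 : B = 0
    · left; left
      exact ⟨hx0, u, by rw [← hz, hb0, add_zero]⟩
    have hu0 : u ≠ 0 := fun h => ha0 (by rw [hA, h]; exact QuadraticMap.map_zero _)
    have hv0 : v ≠ 0 := fun h => hb0 (by rw [hB, h]; exact QuadraticMap.map_zero _)
    have hAD : A ∈ PN.D F φ := ⟨ha0, u, rfl⟩
    have hBD : B ∈ PN.D F ψ := ⟨hb0, v, rfl⟩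
    have hanis : PN.Anisotropic F [A, B] := by
      intro w hw
      rw [qf_pair] at hw
      obtain ⟨z', hz', hzero⟩ := qf_combine φ ψ (w (0 : Fin 2) • u) (w (1 : Fin 2) • v)
      have hz'' : PN.qf F (φ ++ ψ) z' = 0 := by
        rw [hz', QuadraticMap.map_smul, QuadraticMap.map_smul, ← hA, ← hB,
          smul_eq_mul, smul_eq_mul]
        linear_combination hw
      obtain ⟨h3, h4⟩ := hzero (han z' hz'')
      have hw0 : w (0 : Fin 2) = 0 := by
        rcases smul_eq_zero.mp h3 with h | h
        · exact h
        · exact absurd h hu0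
      have hw1 : w (1 : Fin 2) = 0 := by
        rcases smul_eq_zero.mp h4 with h | h
        · exact h
        · exact absurd h hv0
      have hi : ∀ i : Fin 2, w i = 0 := by
        intro i
        fin_cases i
        · exact hw0
        · exact hw1
      funext i
      exact hi i
    obtain ⟨uu, vv, hr⟩ := hrigid A B ha0 hb0 hanis
    have hra : PN.SameSquareClass F A uu ∨ PN.SameSquareClass F A vv := by
      obtain ⟨w, hw⟩ := qf_pair_exists A B 1 0
      exact hr A ⟨ha0, w, by rw [hw]; ring⟩
    have hrb : PN.SameSquareClass F B uu ∨ PN.SameSquareClass F B vv := by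
      obtain ⟨w, hw⟩ := qf_pair_exists A B 0 1
      exact hr B ⟨hb0, w, by rw [hw]; ring⟩
    have hrx : PN.SameSquareClass F x uu ∨ PN.SameSquareClass F x vv := by
      obtain ⟨w, hw⟩ := qf_pair_exists A B 1 1
      exact hr x ⟨hx0, w, by rw [hw, ← hz]; ring⟩
    by_cases hxa : PN.SameSquareClass F x A
    · left; left; exact D_congr hAD hxa hx0
    by_cases hxb : PN.SameSquareClass F x B
    · left; right; exact D_congr hBD hxb hx0
    have hab : PN.SameSquareClass F A B := by
      rcases hrx with h1 | h1 <;> rcases hra with h2 | h2 <;> rcases hrb with h3 | h3 <;>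
        first
          | exact absurd (ssc_trans' h1 h2) hxa
          | exact absurd (ssc_trans' h1 h3) hxb
          | exact ssc_trans' h2 h3
    have hrm : PN.SameSquareClass F (-A) uu ∨ PN.SameSquareClass F (-A) vv := by
      obtain ⟨c, hc, hbc⟩ := hab
      obtain ⟨w, hw⟩ := qf_pair_exists A B p (q * c)
      refine hr (-A) ⟨neg_ne_zero.mpr ha0, w, ?_⟩
      rw [hw, hbc]
      linear_combination B * c ^ 2 * hpq
    have hna : ¬ PN.SameSquareClass F (-A) A := by
      rintro ⟨c, hc, h⟩
      refine hsq c (mul_left_cancel₀ ha0 ?_)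
      linear_combination -h
    have hxma : PN.SameSquareClass F x (-A) := by
      rcases hrx with h1 | h1 <;> rcases hrm with h4 | h4 <;> rcases hra with h2 | h2 <;>
        first
          | exact ssc_trans' h1 h4
          | exact absurd (ssc_trans' h1 h2) hxa
          | exact absurd (ssc_trans' h4 h2) hna
    right
    obtain ⟨c, hc, hxc⟩ := hxma
    have hmx : PN.SameSquareClass F (-x) A := ⟨c, hc, by linear_combination -hxc⟩
    exact ⟨hx0, D_congr hAD hmx (neg_ne_zero.mpr hx0),
      D_congr hBD (ssc_trans hmx hab) (neg_ne_zero.mpr hx0)⟩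
  · rintro ((⟨ha0, u, hu⟩ | ⟨ha0, v, hv⟩) | ⟨hx0, ⟨hm0, u, hu⟩, ⟨-, v, hv⟩⟩)
    · refine ⟨ha0, ?_⟩
      obtain ⟨z, hz, -⟩ := qf_combine φ ψ u 0
      exact ⟨z, by rw [hz, hu, QuadraticMap.map_zero, add_zero]⟩
    · refine ⟨ha0, ?_⟩
      obtain ⟨z, hz, -⟩ := qf_combine φ ψ 0 v
      exact ⟨z, by rw [hz, hv, QuadraticMap.map_zero, zero_add]⟩
    · refine ⟨hx0, ?_⟩
      obtain ⟨z, hz, -⟩ := qf_combine φ ψ (p • u) (q • v)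
      refine ⟨z, ?_⟩
      rw [hz, QuadraticMap.map_smul, QuadraticMap.map_smul, hu, hv,
        smul_eq_mul, smul_eq_mul]
      linear_combination -x * hpq
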